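/- arXiv:1601.05196 — 4 statements merged into one kernel-verified Lean document; each statement's English description precedes it below -/
import Mathlib

section
/- Let k be a commutative ring, R a commutative k-algebra, and let A and B be k-algebras each equipped with a k-algebra isomorphism from R onto its center. Let M be an invertible (B,A)-bimodule over k, i.e., a k-symmetric (B,A)-bimodule for which there exists an (A,B)-bimodule N with M ⊗[A] N ≅ B as B-bimodules and N ⊗[B] M ≅ A as A-bimodules. Then there exists a unique k-algebra automorphism f of R such that m · r = f(r) · m for all m ∈ M and r ∈ R, where r acts on the right through the identification of R with the center of A and f(r) acts on the left through the identification of R with the center of B. -/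
open scoped TensorProduct

universe u

/-- An `R`-central `(B,A)`-bimodule: a left `B`-module and right `A`-module (encoded as a
left `Aᵐᵒᵖ`-module) with commuting actions, both restricting to the same `R`-module
structure.  This is the same data as a module over `B ⊗[R] Aᵐᵒᵖ`. -/
structure CBimod (R B A : Type u) [CommRing R] [Ring B] [Ring A] [Algebra R B] [Algebra R A] :
    Type (u + 1) where
  carrier : Type u
  [isAddCommGroup : AddCommGroup carrier]
  [isModR : Module R carrier]
  [isModLeft : Module B carrier]
  [isModRight : Module Aᵐᵒᵖ carrier]
  [isTowerLeft : IsScalarTower R B carrier]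
  [isTowerRight : IsScalarTower R Aᵐᵒᵖ carrier]
  [isCommuting : SMulCommClass B Aᵐᵒᵖ carrier]

attribute [instance] CBimod.isAddCommGroup CBimod.isModR CBimod.isModLeft CBimod.isModRight
  CBimod.isTowerLeft CBimod.isTowerRight CBimod.isCommuting

variable {R B A C : Type u} [CommRing R] [Ring B] [Ring A] [Ring C]
  [Algebra R B] [Algebra R A] [Algebra R C]

/-- The subspace of `M ⊗[R] N` by which one quotients to form the balanced tensor product
`M ⊗[A] N`. -/
def midRel (M : CBimod R B A) (N : CBimod R A C) : Submodule R (M.carrier ⊗[R] N.carrier) :=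
  Submodule.span R {z | ∃ (m : M.carrier) (a : A) (x : N.carrier),
    z = (MulOpposite.op a • m) ⊗ₜ[R] x - m ⊗ₜ[R] (a • x)}

/-- The balanced tensor product `M ⊗[A] N` of an `R`-central `(B,A)`-bimodule `M` and an
`R`-central `(A,C)`-bimodule `N`. -/
abbrev tensorOver (M : CBimod R B A) (N : CBimod R A C) : Type u :=
  (M.carrier ⊗[R] N.carrier) ⧸ midRel M N

/-- `M ⊗[A] N ≅ B` as `B`-bimodules, where the two `B`-actions on `M ⊗[A] N` are induced by
the left `B`-action on `M` and the right `B`-action on `N`, and `B` is a bimodule over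
itself by left and right multiplication. -/
def TensorIsoAlgebra (M : CBimod R B A) (N : CBimod R A B) : Prop :=
  ∃ g : tensorOver M N ≃ₗ[R] B,
    (∀ (b : B) (m : M.carrier) (x : N.carrier),
        g (Submodule.Quotient.mk ((b • m) ⊗ₜ[R] x)) =
          b * g (Submodule.Quotient.mk (m ⊗ₜ[R] x))) ∧
    (∀ (b : B) (m : M.carrier) (x : N.carrier),
        g (Submodule.Quotient.mk (m ⊗ₜ[R] (MulOpposite.op b • x))) =
          g (Submodule.Quotient.mk (m ⊗ₜ[R] x)) * b)

/-- Right multiplication, as an `R`-algebra map `Aᵐᵒᵖ → End_R(A)`. -/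
def mulRightAlgHom (R A : Type u) [CommRing R] [Ring A] [Algebra R A] :
    Aᵐᵒᵖ →ₐ[R] Module.End R A where
  toFun b := LinearMap.mulRight R b.unop
  map_one' := by ext x; simp
  map_mul' b b' := by ext x; simp [mul_assoc]
  map_zero' := by ext x; simp
  map_add' b b' := by ext x; simp [mul_add]
  commutes' r := by
    ext x
    simp [Module.algebraMap_end_apply, ← Algebra.commutes r x, Algebra.smul_def]

/-- The action map `A ⊗[R] Aᵐᵒᵖ → End_R(A)`, `a ⊗ bᵒᵖ ↦ (x ↦ a * x * b)`; an algebra `A` is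
Azumaya over `R` precisely when it is finitely generated projective as an `R`-module and
this map is bijective. -/
noncomputable def azumayaHom (R A : Type u) [CommRing R] [Ring A] [Algebra R A] :
    A ⊗[R] Aᵐᵒᵖ →ₐ[R] Module.End R A :=
  Algebra.TensorProduct.lift (Algebra.lmul R A) (mulRightAlgHom R A)
    (fun a b => by
      show _ = _
      ext x
      simp [mulRightAlgHom, Module.End.mul_apply, mul_assoc])

section Aux

open MulOpposite

variable {K BB AA : Type u} [CommRing K] [Ring BB] [Ring AA] [Algebra K BB] [Algebra K AA]
variable (M : CBimod K BB AA) (N : CBimod K AA BB)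

/-- The defining relation of the balanced tensor product, on generators. -/
lemma mk_rel (m : M.carrier) (a : AA) (x : N.carrier) :
    (Submodule.Quotient.mk ((op a • m) ⊗ₜ[K] x) : tensorOver M N) =
      Submodule.Quotient.mk (m ⊗ₜ[K] (a • x)) :=
  (Submodule.Quotient.eq _).2 (Submodule.subset_span ⟨m, a, x, rfl⟩)

/-- Ext principle for linear maps out of `tensorOver`. -/
lemma tensor_ext {P : Type u} [AddCommGroup P] [Module K P]
    {f₁ f₂ : tensorOver M N →ₗ[K] P}
    (hfg : ∀ m x, f₁ (Submodule.Quotient.mk (m ⊗ₜ[K] x)) =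
      f₂ (Submodule.Quotient.mk (m ⊗ₜ[K] x))) : f₁ = f₂ := by
  ext m x
  exact hfg m x

/-- `a ↦ op a • m` as a linear map. -/
def opSmulLin (m : M.carrier) : AA →ₗ[K] M.carrier where
  toFun a := op a • m
  map_add' a a' := by show (op a + op a') • m = _; rw [add_smul]
  map_smul' r a := by show ((r • op a) • m) = r • (op a • m); rw [smul_assoc]

lemma opSmulLin_apply (m : M.carrier) (a : AA) : opSmulLin M m a = op a • m := rfl

/-- The auxiliary map `W : M ⊗ N → End(M)`, `m ⊗ x ↦ (m' ↦ op (h (x ⊗ m')) • m)`. -/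
noncomputable def Wq (h : tensorOver N M ≃ₗ[K] AA)
    (hh1 : ∀ (a : AA) (y : N.carrier) (m : M.carrier),
      h (Submodule.Quotient.mk ((a • y) ⊗ₜ[K] m)) =
        a * h (Submodule.Quotient.mk (y ⊗ₜ[K] m))) :
    tensorOver M N →ₗ[K] (M.carrier →ₗ[K] M.carrier) :=
  Submodule.liftQ _ (TensorProduct.lift (LinearMap.mk₂ K
    (fun m x => (opSmulLin M m) ∘ₗ h.toLinearMap ∘ₗ (midRel N M).mkQ ∘ₗ
        TensorProduct.mk K N.carrier M.carrier x)
    (fun m₁ m₂ x => by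
      ext m'
      simp only [LinearMap.comp_apply, LinearMap.add_apply, LinearEquiv.coe_coe,
        Submodule.mkQ_apply, TensorProduct.mk_apply, opSmulLin_apply]
      rw [smul_add])
    (fun r m x => by
      ext m'
      simp only [LinearMap.comp_apply, LinearMap.smul_apply, LinearEquiv.coe_coe,
        Submodule.mkQ_apply, TensorProduct.mk_apply, opSmulLin_apply]
      exact (smul_comm r _ m).symm)
    (fun m x₁ x₂ => by
      ext m'
      simp only [LinearMap.comp_apply, LinearMap.add_apply, LinearEquiv.coe_coe,
        Submodule.mkQ_apply, TensorProduct.mk_apply, opSmulLin_apply,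
        TensorProduct.add_tmul, Submodule.Quotient.mk_add, map_add, op_add, add_smul])
    (fun r m x => by
      ext m'
      simp only [LinearMap.comp_apply, LinearMap.smul_apply, LinearEquiv.coe_coe,
        Submodule.mkQ_apply, TensorProduct.mk_apply, opSmulLin_apply]
      rw [show ((r • x) ⊗ₜ[K] m' : N.carrier ⊗[K] M.carrier) = r • (x ⊗ₜ[K] m') from
        (TensorProduct.smul_tmul' r x m').symm, Submodule.Quotient.mk_smul, map_smul]
      show (r • op _) • m = _
      rw [smul_assoc])))
    (by
      rw [midRel, Submodule.span_le]
      rintro _ ⟨m, a, x, rfl⟩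
      simp only [SetLike.mem_coe, LinearMap.mem_ker, map_sub]
      ext m'
      simp only [TensorProduct.lift.tmul, LinearMap.mk₂_apply, LinearMap.sub_apply,
        LinearMap.comp_apply, LinearEquiv.coe_coe, Submodule.mkQ_apply,
        TensorProduct.mk_apply, LinearMap.zero_apply, opSmulLin_apply]
      rw [hh1, op_mul, mul_smul, sub_self])

lemma Wq_apply (h : tensorOver N M ≃ₗ[K] AA)
    (hh1 : ∀ (a : AA) (y : N.carrier) (m : M.carrier),
      h (Submodule.Quotient.mk ((a • y) ⊗ₜ[K] m)) =
        a * h (Submodule.Quotient.mk (y ⊗ₜ[K] m)))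
    (m : M.carrier) (x : N.carrier) (m' : M.carrier) :
    Wq M N h hh1 (Submodule.Quotient.mk (m ⊗ₜ[K] x)) m' =
      op (h (Submodule.Quotient.mk (x ⊗ₜ[K] m'))) • m := by
  rw [Wq, Submodule.liftQ_apply]
  simp only [TensorProduct.lift.tmul, LinearMap.mk₂_apply, LinearMap.comp_apply,
    LinearEquiv.coe_coe, Submodule.mkQ_apply, TensorProduct.mk_apply, opSmulLin_apply]

section WithIso

variable (g : tensorOver M N ≃ₗ[K] BB) (h : tensorOver N M ≃ₗ[K] AA)
variable (hg1 : ∀ (b : BB) (m : M.carrier) (x : N.carrier),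
    g (Submodule.Quotient.mk ((b • m) ⊗ₜ[K] x)) = b * g (Submodule.Quotient.mk (m ⊗ₜ[K] x)))
variable (hg2 : ∀ (b : BB) (m : M.carrier) (x : N.carrier),
    g (Submodule.Quotient.mk (m ⊗ₜ[K] (op b • x))) = g (Submodule.Quotient.mk (m ⊗ₜ[K] x)) * b)
variable (hh1 : ∀ (a : AA) (y : N.carrier) (m : M.carrier),
    h (Submodule.Quotient.mk ((a • y) ⊗ₜ[K] m)) = a * h (Submodule.Quotient.mk (y ⊗ₜ[K] m)))
variable (hh2 : ∀ (a : AA) (y : N.carrier) (m : M.carrier),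
    h (Submodule.Quotient.mk (y ⊗ₜ[K] (op a • m))) = h (Submodule.Quotient.mk (y ⊗ₜ[K] m)) * a)

include hg2 hh1 in
lemma key (m : M.carrier) (y : N.carrier) (m' : M.carrier) :
    Wq M N h hh1 (g.symm 1) (g (Submodule.Quotient.mk (m ⊗ₜ[K] y)) • m') =
      op (h (Submodule.Quotient.mk (y ⊗ₜ[K] m'))) • m := by
  have step : ∀ (b : BB),
      (Wq M N h hh1).flip (b • m') = ((Wq M N h hh1).flip m') ∘ₗ
        (g.symm.toLinearMap ∘ₗ (LinearMap.mulRight K b) ∘ₗ g.toLinearMap) := by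
    intro b
    apply tensor_ext M N
    intro m₁ x
    simp only [LinearMap.flip_apply, LinearMap.comp_apply, LinearEquiv.coe_coe,
      LinearMap.mulRight_apply]
    rw [Wq_apply, ← mk_rel N M x b m', ← hg2, LinearEquiv.symm_apply_apply, Wq_apply]
  have e1 := congrArg (fun F => F (g.symm 1)) (step (g (Submodule.Quotient.mk (m ⊗ₜ[K] y))))
  simp only [LinearMap.flip_apply, LinearMap.comp_apply, LinearEquiv.coe_coe,
    LinearMap.mulRight_apply, LinearEquiv.apply_symm_apply, one_mul,
    LinearEquiv.symm_apply_apply] at e1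
  rw [e1, Wq_apply]

include hg2 hh1 in
lemma first_slot_faithful (m₀ : M.carrier)
    (h0 : ∀ x : N.carrier, g (Submodule.Quotient.mk (m₀ ⊗ₜ[K] x)) = 0) : m₀ = 0 := by
  have hΨ : (opSmulLin M m₀) ∘ₗ h.toLinearMap = 0 := by
    apply tensor_ext N M
    intro y m'
    simp only [LinearMap.comp_apply, LinearEquiv.coe_coe, LinearMap.zero_apply, opSmulLin_apply]
    rw [← key M N g h hg2 hh1 m₀ y m', h0, zero_smul, map_zero]
  have := congrArg (fun F => F (h.symm 1)) hΨ
  simp only [LinearMap.comp_apply, LinearEquiv.coe_coe, LinearEquiv.apply_symm_apply,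
    LinearMap.zero_apply, opSmulLin_apply, op_one, one_smul] at this
  exact this

include hg1 in
lemma left_faithful (b : BB) (h0 : ∀ m : M.carrier, b • m = 0) : b = 0 := by
  have hL : (LinearMap.mulLeft K b) ∘ₗ g.toLinearMap = 0 := by
    apply tensor_ext M N
    intro m x
    simp only [LinearMap.comp_apply, LinearEquiv.coe_coe, LinearMap.zero_apply,
      LinearMap.mulLeft_apply]
    rw [← hg1, h0, TensorProduct.zero_tmul, Submodule.Quotient.mk_zero, map_zero]
  have := congrArg (fun F => F (g.symm 1)) hL
  simp only [LinearMap.comp_apply, LinearEquiv.coe_coe, LinearEquiv.apply_symm_apply,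
    LinearMap.zero_apply, LinearMap.mulLeft_apply, mul_one] at this
  exact this

include hg1 in
lemma left_faithful' (b b' : BB) (h0 : ∀ m : M.carrier, b • m = b' • m) : b = b' := by
  have := left_faithful M N g hg1 (b - b') (fun m => by rw [sub_smul, h0, sub_self])
  exact sub_eq_zero.mp this

include hg1 hg2 hh1 in
lemma exists_central (a : AA) (ha : ∀ a' : AA, a * a' = a' * a) :
    ∃ b : BB, (∀ b' : BB, b * b' = b' * b) ∧ ∀ m : M.carrier, op a • m = b • m := by
  classical
  -- the linear map `m ↦ op a • m`
  set la : M.carrier →ₗ[K] M.carrier :=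
    { toFun := fun m => op a • m
      map_add' := fun m m' => smul_add _ m m'
      map_smul' := fun r m => (smul_comm r (op a) m).symm } with hla
  -- the induced map on the balanced tensor product
  have hker : midRel M N ≤ LinearMap.ker ((midRel M N).mkQ ∘ₗ
      LinearMap.rTensor N.carrier la) := by
    rw [midRel, Submodule.span_le]
    rintro _ ⟨m, a', x, rfl⟩
    simp only [SetLike.mem_coe, LinearMap.mem_ker, map_sub, LinearMap.comp_apply,
      LinearMap.rTensor_tmul, Submodule.mkQ_apply]
    have : la (op a' • m) = op a' • la m := by
      simp only [hla, LinearMap.coe_mk, AddHom.coe_mk]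
      rw [← mul_smul, ← mul_smul, ← op_mul, ← op_mul, ha]
    rw [this]
    exact sub_eq_zero.mpr (mk_rel M N (la m) a' x)
  set Θ : tensorOver M N →ₗ[K] tensorOver M N :=
    Submodule.liftQ _ ((midRel M N).mkQ ∘ₗ LinearMap.rTensor N.carrier la) hker with hΘ
  have Θ_mk : ∀ (m : M.carrier) (x : N.carrier),
      Θ (Submodule.Quotient.mk (m ⊗ₜ[K] x)) =
        Submodule.Quotient.mk ((op a • m) ⊗ₜ[K] x) := by
    intro m x
    rw [hΘ, Submodule.liftQ_apply]
    simp only [LinearMap.comp_apply, LinearMap.rTensor_tmul, Submodule.mkQ_apply, hla,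
      LinearMap.coe_mk, AddHom.coe_mk]
  set b : BB := g (Θ (g.symm 1)) with hb
  -- Θ commutes with the right `BB`-multiplications transported along `g`
  have comm : ∀ (b' : BB) (z : tensorOver M N),
      Θ (g.symm (g z * b')) = g.symm (g (Θ z) * b') := by
    intro b'
    have := tensor_ext M N (f₁ := Θ ∘ₗ (g.symm.toLinearMap ∘ₗ
        (LinearMap.mulRight K b') ∘ₗ g.toLinearMap))
      (f₂ := (g.symm.toLinearMap ∘ₗ (LinearMap.mulRight K b') ∘ₗ g.toLinearMap) ∘ₗ Θ)
      (fun m x => by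
        simp only [LinearMap.comp_apply, LinearEquiv.coe_coe, LinearMap.mulRight_apply]
        rw [← hg2, LinearEquiv.symm_apply_apply, Θ_mk, Θ_mk, ← hg2,
          LinearEquiv.symm_apply_apply])
    intro z
    exact congrArg (fun F => F z) this
  have C1 : ∀ (m : M.carrier) (x : N.carrier),
      g (Θ (Submodule.Quotient.mk (m ⊗ₜ[K] x))) =
        b * g (Submodule.Quotient.mk (m ⊗ₜ[K] x)) := by
    intro m x
    have e : (Submodule.Quotient.mk (m ⊗ₜ[K] x) : tensorOver M N) =
        g.symm (g (g.symm 1) * g (Submodule.Quotient.mk (m ⊗ₜ[K] x))) := by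
      rw [LinearEquiv.apply_symm_apply, one_mul, LinearEquiv.symm_apply_apply]
    conv_lhs => rw [e]
    rw [comm, LinearEquiv.apply_symm_apply]
  have prop : ∀ m : M.carrier, op a • m = b • m := by
    intro m
    have h0 : ∀ x : N.carrier,
        g (Submodule.Quotient.mk ((op a • m - b • m) ⊗ₜ[K] x)) = 0 := by
      intro x
      rw [TensorProduct.sub_tmul, Submodule.Quotient.mk_sub, map_sub]
      have e1 : g (Submodule.Quotient.mk ((op a • m) ⊗ₜ[K] x)) =
          b * g (Submodule.Quotient.mk (m ⊗ₜ[K] x)) := by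
        rw [← Θ_mk, C1]
      rw [e1, hg1, sub_self]
    have := first_slot_faithful M N g h hg2 hh1 (op a • m - b • m) h0
    exact sub_eq_zero.mp this
  refine ⟨b, fun b' => ?_, prop⟩
  apply left_faithful' M N g hg1
  intro m
  rw [mul_smul, mul_smul, ← prop, ← prop]
  exact (smul_comm b' (op a) m).symm

include hg1 hg2 hh1 hh2 in
lemma cross (a : AA) (ha : ∀ a' : AA, a * a' = a' * a) (b : BB)
    (hab : ∀ m : M.carrier, op a • m = b • m) (y : N.carrier) :
    a • y = op b • y := by
  have h0 : ∀ m : M.carrier,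
      h (Submodule.Quotient.mk ((a • y - op b • y) ⊗ₜ[K] m)) = 0 := by
    intro m
    rw [TensorProduct.sub_tmul, Submodule.Quotient.mk_sub, map_sub]
    rw [hh1, ha, ← hh2, hab, ← mk_rel N M y b m, sub_self]
  have := first_slot_faithful N M h g hh2 hg1 (a • y - op b • y) h0
  exact sub_eq_zero.mp this

end WithIso

end Aux

/-- Let `k` be a commutative ring, `R` a commutative `k`-algebra, and `A`,
`B` `k`-algebras equipped with `k`-algebra isomorphisms `ζA : R ≅ Z(A)`, `ζB : R ≅ Z(B)`
onto their centers.  Let `M` be an invertible `k`-symmetric `(B,A)`-bimodule, i.e. there is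
a `(A,B)`-bimodule `N` with `M ⊗[A] N ≅ B` as `B`-bimodules and `N ⊗[B] M ≅ A` as
`A`-bimodules.  Then there is a unique `k`-algebra automorphism `f` of `R` such that
`m · r = f(r) · m` for all `m ∈ M`, `r ∈ R`, where `r` acts on the right through `ζA` and
`f(r)` acts on the left through `ζB`. -/
theorem stmt_5 {k R A B : Type u} [CommRing k] [CommRing R] [Algebra k R]
    [Ring A] [Algebra k A] [Ring B] [Algebra k B]
    (ζA : R ≃ₐ[k] Subalgebra.center k A) (ζB : R ≃ₐ[k] Subalgebra.center k B)
    (M : CBimod k B A)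
    (hM : ∃ N : CBimod k A B, TensorIsoAlgebra M N ∧ TensorIsoAlgebra N M) :
    ∃! f : R ≃ₐ[k] R, ∀ (m : M.carrier) (r : R),
      MulOpposite.op ((ζA r : A)) • m = ((ζB (f r) : B)) • m := by
  classical
  obtain ⟨N, ⟨g, hg1, hg2⟩, ⟨h, hh1, hh2⟩⟩ := hM
  have hζA : ∀ (r : R) (a' : A), (ζA r : A) * a' = a' * (ζA r : A) := fun r a' =>
    (Subalgebra.mem_center_iff.mp (ζA r).2 a').symm
  have hζB : ∀ (s : R) (b' : B), (ζB s : B) * b' = b' * (ζB s : B) := fun s b' =>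
    (Subalgebra.mem_center_iff.mp (ζB s).2 b').symm
  choose c hc1 hc2 using fun r : R =>
    exists_central M N g h hg1 hg2 hh1 (ζA r) (hζA r)
  choose d hd1 hd2 using fun s : R =>
    exists_central N M h g hh1 hh2 hg1 (ζB s) (hζB s)
  have hcent : ∀ r : R, c r ∈ Subalgebra.center k B := fun r =>
    Subalgebra.mem_center_iff.mpr (fun b' => (hc1 r b').symm)
  have hdent : ∀ s : R, d s ∈ Subalgebra.center k A := fun s =>
    Subalgebra.mem_center_iff.mpr (fun a' => (hd1 s a').symm)
  -- ring homomorphism properties of `c`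
  have cadd : ∀ r s : R, c (r + s) = c r + c s := by
    intro r s
    apply left_faithful' M N g hg1
    intro m
    have e : (ζA (r + s) : A) = (ζA r : A) + (ζA s : A) := by rw [map_add]; rfl
    rw [← hc2, e, MulOpposite.op_add, add_smul, hc2, hc2, add_smul]
  have czero : c 0 = 0 := by
    apply left_faithful' M N g hg1
    intro m
    have e : (ζA (0 : R) : A) = 0 := by rw [map_zero]; rfl
    rw [← hc2, e]
    show (0 : Aᵐᵒᵖ) • m = (0 : B) • m
    rw [zero_smul, zero_smul]
  have cmul : ∀ r s : R, c (r * s) = c r * c s := by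
    intro r s
    apply left_faithful' M N g hg1
    intro m
    have e : (ζA (r * s) : A) = (ζA r : A) * (ζA s : A) := by rw [map_mul]; rfl
    rw [← hc2, e, MulOpposite.op_mul, mul_smul, hc2 r, mul_smul]
    rw [show MulOpposite.op ((ζA s : A)) • c r • m = c r • (MulOpposite.op ((ζA s : A)) • m)
      from (smul_comm (c r) _ m).symm, hc2 s]
  have cone : c 1 = 1 := by
    apply left_faithful' M N g hg1
    intro m
    have e : (ζA (1 : R) : A) = 1 := by rw [map_one]; rfl
    rw [← hc2, e, MulOpposite.op_one, one_smul, one_smul]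
  have calg : ∀ t : k, c (algebraMap k R t) = algebraMap k B t := by
    intro t
    apply left_faithful' M N g hg1
    intro m
    have e : (ζA (algebraMap k R t) : A) = algebraMap k A t := by
      rw [AlgEquiv.commutes]; rfl
    rw [← hc2, e]
    show algebraMap k Aᵐᵒᵖ t • m = _
    rw [algebraMap_smul, algebraMap_smul]
  -- the algebra homomorphisms
  set F : R →ₐ[k] R :=
    { toFun := fun r => ζB.symm ⟨c r, hcent r⟩
      map_one' := by
        show ζB.symm ⟨c 1, hcent 1⟩ = 1
        have e : (⟨c 1, hcent 1⟩ : Subalgebra.center k B) = 1 := by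
          apply Subtype.ext; simpa using cone
        rw [e, map_one]
      map_mul' := fun r s => by
        show ζB.symm ⟨c (r*s), hcent _⟩ = ζB.symm ⟨c r, hcent r⟩ * ζB.symm ⟨c s, hcent s⟩
        have e : (⟨c (r*s), hcent _⟩ : Subalgebra.center k B)
            = ⟨c r, hcent r⟩ * ⟨c s, hcent s⟩ := by
          apply Subtype.ext; simpa using cmul r s
        rw [e, map_mul]
      map_zero' := by
        show ζB.symm ⟨c 0, hcent 0⟩ = 0
        have e : (⟨c 0, hcent 0⟩ : Subalgebra.center k B) = 0 := by
          apply Subtype.ext; simpa using czero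
        rw [e, map_zero]
      map_add' := fun r s => by
        show ζB.symm ⟨c (r+s), hcent _⟩ = ζB.symm ⟨c r, hcent r⟩ + ζB.symm ⟨c s, hcent s⟩
        have e : (⟨c (r+s), hcent _⟩ : Subalgebra.center k B)
            = ⟨c r, hcent r⟩ + ⟨c s, hcent s⟩ := by
          apply Subtype.ext; simpa using cadd r s
        rw [e, map_add]
      commutes' := fun t => by
        show ζB.symm ⟨c (algebraMap k R t), hcent _⟩ = algebraMap k R t
        have e : (⟨c (algebraMap k R t), hcent _⟩ : Subalgebra.center k B)
            = algebraMap k (Subalgebra.center k B) t := by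
          apply Subtype.ext; simpa using calg t
        rw [e]
        exact ζB.symm.commutes t } with hF
  set F' : R → R := fun s => ζA.symm ⟨d s, hdent s⟩ with hF'
  have hFval : ∀ r : R, (ζB (F r) : B) = c r := by
    intro r
    show ((ζB (ζB.symm ⟨c r, hcent r⟩) : Subalgebra.center k B) : B) = c r
    rw [AlgEquiv.apply_symm_apply]
  have hF'val : ∀ s : R, (ζA (F' s) : A) = d s := by
    intro s
    show ((ζA (ζA.symm ⟨d s, hdent s⟩) : Subalgebra.center k A) : A) = d s
    rw [AlgEquiv.apply_symm_apply]
  -- cross identities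
  have crossM : ∀ (r : R) (y : N.carrier), (ζA r : A) • y = MulOpposite.op (c r) • y :=
    fun r => cross M N g h hg1 hg2 hh1 hh2 (ζA r) (hζA r) (c r) (hc2 r)
  have crossN : ∀ (s : R) (m : M.carrier), (ζB s : B) • m = MulOpposite.op (d s) • m :=
    fun s => cross N M h g hh1 hh2 hg1 hg2 (ζB s) (hζB s) (d s) (hd2 s)
  have leftInv : ∀ r : R, F' (F r) = r := by
    intro r
    have e1 : d (F r) = (ζA r : A) := by
      apply left_faithful' N M h hh1
      intro y
      rw [← hd2, hFval, ← crossM]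
    have e2 : (⟨d (F r), hdent _⟩ : Subalgebra.center k A) = ζA r := Subtype.ext e1
    show ζA.symm ⟨d (F r), hdent _⟩ = r
    rw [e2, AlgEquiv.symm_apply_apply]
  have rightInv : ∀ s : R, F (F' s) = s := by
    intro s
    have e1 : c (F' s) = (ζB s : B) := by
      apply left_faithful' M N g hg1
      intro m
      rw [← hc2, hF'val, ← crossN]
    have : (⟨c (F' s), hcent _⟩ : Subalgebra.center k B) = ζB s := Subtype.ext e1
    show ζB.symm ⟨c (F' s), hcent _⟩ = s
    rw [this, AlgEquiv.symm_apply_apply]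
  set f : R ≃ₐ[k] R :=
    { toFun := F
      invFun := F'
      left_inv := leftInv
      right_inv := rightInv
      map_mul' := F.map_mul
      map_add' := F.map_add
      commutes' := F.commutes } with hf
  refine ⟨f, ?_, ?_⟩
  · intro m r
    have hfr : f r = F r := rfl
    rw [hfr, hFval]
    exact hc2 r m
  · intro f₂ hf₂
    apply AlgEquiv.ext
    intro r
    have e : (ζB (f₂ r) : B) = (ζB (f r) : B) := by
      apply left_faithful' M N g hg1
      intro m
      have hfr : f r = F r := rfl
      rw [← hf₂ m r, hfr, hFval, ← hc2]
    exact ζB.injective (Subtype.ext e)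
end

section
/- Let K = ℚ(√2) be the field obtained from ℚ by adjoining √2. Then the quaternion algebra A = (−1, −√2) over K, i.e., the K-algebra with generators i, j and relations i² = −1, j² = −√2, ij = −ji, is a division ring (and a central simple K-algebra). -/
open scoped Quaternion
open IntermediateField

noncomputable section

/-- `K = ℚ(√2)`, the subfield of `ℝ` generated over `ℚ` by `√2`. -/
abbrev Ksqrt2 : IntermediateField ℚ ℝ := ℚ⟮Real.sqrt 2⟯

/-- `√2` as an element of `K = ℚ(√2)`. -/
def sqrt2 : Ksqrt2 := ⟨Real.sqrt 2, IntermediateField.mem_adjoin_simple_self ℚ (Real.sqrt 2)⟩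

/-- The reduced norm of a quaternion in `(−1, −√2)` over `K`. -/
def qnorm (x : ℍ[Ksqrt2, -1, -sqrt2]) : Ksqrt2 :=
  x.re ^ 2 + x.imI ^ 2 + sqrt2 * x.imJ ^ 2 + sqrt2 * x.imK ^ 2

lemma self_mul_star' (x : ℍ[Ksqrt2, -1, -sqrt2]) :
    x * star x = (qnorm x : ℍ[Ksqrt2, -1, -sqrt2]) := by
  refine QuaternionAlgebra.ext ?_ ?_ ?_ ?_ <;>
    simp only [QuaternionAlgebra.re_mul, QuaternionAlgebra.imI_mul, QuaternionAlgebra.imJ_mul,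
      QuaternionAlgebra.imK_mul, QuaternionAlgebra.re_star, QuaternionAlgebra.imI_star,
      QuaternionAlgebra.imJ_star, QuaternionAlgebra.imK_star, QuaternionAlgebra.re_coe,
      QuaternionAlgebra.imI_coe, QuaternionAlgebra.imJ_coe, QuaternionAlgebra.imK_coe, qnorm] <;>
    ring

lemma star_mul_self' (x : ℍ[Ksqrt2, -1, -sqrt2]) :
    star x * x = (qnorm x : ℍ[Ksqrt2, -1, -sqrt2]) := by
  rw [star_comm_self', self_mul_star']

lemma qnorm_ne_zero (x : ℍ[Ksqrt2, -1, -sqrt2]) (hx : x ≠ 0) : qnorm x ≠ 0 := by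
  intro h
  apply hx
  have h' : ((x.re : ℝ)) ^ 2 + ((x.imI : ℝ)) ^ 2 + Real.sqrt 2 * ((x.imJ : ℝ)) ^ 2
      + Real.sqrt 2 * ((x.imK : ℝ)) ^ 2 = 0 := by
    have := congrArg (Subtype.val) h
    simpa [qnorm, sqrt2] using this
  have h2 : (0:ℝ) < Real.sqrt 2 := Real.sqrt_pos.mpr (by norm_num)
  have t1 : (0:ℝ) ≤ ((x.re : ℝ)) ^ 2 := sq_nonneg _
  have t2 : (0:ℝ) ≤ ((x.imI : ℝ)) ^ 2 := sq_nonneg _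
  have t3 : (0:ℝ) ≤ Real.sqrt 2 * ((x.imJ : ℝ)) ^ 2 := mul_nonneg h2.le (sq_nonneg _)
  have t4 : (0:ℝ) ≤ Real.sqrt 2 * ((x.imK : ℝ)) ^ 2 := mul_nonneg h2.le (sq_nonneg _)
  have e1 : ((x.re : ℝ)) ^ 2 = 0 := by linarith
  have e2 : ((x.imI : ℝ)) ^ 2 = 0 := by linarith
  have e3 : Real.sqrt 2 * ((x.imJ : ℝ)) ^ 2 = 0 := by linarith
  have e4 : Real.sqrt 2 * ((x.imK : ℝ)) ^ 2 = 0 := by linarith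
  have f3 : ((x.imJ : ℝ)) ^ 2 = 0 := by
    rcases mul_eq_zero.mp e3 with h | h
    · exact absurd h h2.ne'
    · exact h
  have f4 : ((x.imK : ℝ)) ^ 2 = 0 := by
    rcases mul_eq_zero.mp e4 with h | h
    · exact absurd h h2.ne'
    · exact h
  have g1 : x.re = 0 := by
    have := pow_eq_zero_iff (n := 2) (by norm_num) |>.mp e1
    exact_mod_cast this
  have g2 : x.imI = 0 := by
    have := pow_eq_zero_iff (n := 2) (by norm_num) |>.mp e2
    exact_mod_cast this
  have g3 : x.imJ = 0 := by
    have := pow_eq_zero_iff (n := 2) (by norm_num) |>.mp f3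
    exact_mod_cast this
  have g4 : x.imK = 0 := by
    have := pow_eq_zero_iff (n := 2) (by norm_num) |>.mp f4
    exact_mod_cast this
  exact QuaternionAlgebra.ext g1 g2 g3 g4

lemma isUnit_of_ne_zero (x : ℍ[Ksqrt2, -1, -sqrt2]) (hx : x ≠ 0) : IsUnit x := by
  have hn : qnorm x ≠ 0 := qnorm_ne_zero x hx
  refine ⟨⟨x, ((qnorm x)⁻¹ : Ksqrt2) * star x, ?_, ?_⟩, rfl⟩
  · calc x * (((qnorm x)⁻¹ : Ksqrt2) * star x)
        = ((qnorm x)⁻¹ : Ksqrt2) * (x * star x) := by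
          rw [← mul_assoc, ← QuaternionAlgebra.coe_commutes, mul_assoc]
      _ = 1 := by
          rw [self_mul_star', ← QuaternionAlgebra.coe_mul, inv_mul_cancel₀ hn,
            QuaternionAlgebra.coe_one]
  · calc (((qnorm x)⁻¹ : Ksqrt2) * star x) * x
        = ((qnorm x)⁻¹ : Ksqrt2) * (star x * x) := by rw [mul_assoc]
      _ = 1 := by
          rw [star_mul_self', ← QuaternionAlgebra.coe_mul, inv_mul_cancel₀ hn,
            QuaternionAlgebra.coe_one]

/-- The quaternion algebra `(−1, −√2)` over `K = ℚ(√2)`, i.e. the `K`-algebra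
with generators `i`, `j` and relations `i² = −1`, `j² = −√2`, `ij = −ji`, is a division ring
(every nonzero element is a unit) and a central simple `K`-algebra. -/
theorem stmt_6 :
    (∀ x : ℍ[Ksqrt2, -1, -sqrt2], x ≠ 0 → IsUnit x) ∧
    Algebra.IsCentral Ksqrt2 ℍ[Ksqrt2, -1, -sqrt2] ∧
    IsSimpleRing ℍ[Ksqrt2, -1, -sqrt2] := by
  refine ⟨isUnit_of_ne_zero, ⟨?_⟩, ?_⟩
  · intro x hx
    rw [Subalgebra.mem_center_iff] at hx
    have hi := hx ⟨0, 1, 0, 0⟩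
    have hj := hx ⟨0, 0, 1, 0⟩
    rw [QuaternionAlgebra.ext_iff] at hi hj
    simp [QuaternionAlgebra.re_mul, QuaternionAlgebra.imI_mul, QuaternionAlgebra.imJ_mul,
      QuaternionAlgebra.imK_mul] at hi hj
    have h2 : x.imI = 0 := by linear_combination (-1/2 : Ksqrt2) * hj.2
    have h3 : x.imJ = 0 := by linear_combination (1/2 : Ksqrt2) * hi.2
    have h4 : x.imK = 0 := by linear_combination (-1/2 : Ksqrt2) * hi.1
    rw [Algebra.mem_bot]
    refine ⟨x.re, ?_⟩
    rw [QuaternionAlgebra.coe_algebraMap]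
    exact QuaternionAlgebra.ext rfl (by simp [h2]) (by simp [h3]) (by simp [h4])
  · refine ⟨⟨fun I => ?_⟩⟩
    rcases eq_or_ne I ⊥ with h | h
    · exact Or.inl h
    · right
      obtain ⟨x, hxI, hx0⟩ : ∃ x ∈ I, x ≠ 0 := by
        by_contra hc
        push_neg at hc
        refine h (le_antisymm ?_ bot_le)
        rw [TwoSidedIdeal.le_iff]
        intro y hy
        exact (TwoSidedIdeal.mem_bot _).mpr (hc y hy)
      obtain ⟨u, rfl⟩ := isUnit_of_ne_zero x hx0
      refine TwoSidedIdeal.eq_top I ?_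
      have : ((u⁻¹ : _) : ℍ[Ksqrt2, -1, -sqrt2]) * u ∈ I := I.mul_mem_left _ _ hxI
      simpa using this
end
end

section
/- Let K = ℚ(√2) and let A = (−1, −√2) be the quaternion algebra over K with i² = −1, j² = −√2, ij = −ji. Then every ℚ-algebra automorphism of A is inner, i.e., for every ring automorphism f of A fixing ℚ pointwise there exists a unit u ∈ A with f(x) = u x u⁻¹ for all x ∈ A. (Equivalently, the outer automorphism group Out_ℚ(A) is trivial.) -/
open scoped Quaternion
open IntermediateField

noncomputable section

set_option synthInstance.maxHeartbeats 1000000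
set_option maxHeartbeats 4000000

namespace Stmt7

abbrev AQ : Type := ℍ[Ksqrt2, -1, -sqrt2]
def iq : AQ := ⟨0,1,0,0⟩
def jq : AQ := ⟨0,0,1,0⟩
def kq : AQ := ⟨0,0,0,1⟩

lemma hs2 : sqrt2 * sqrt2 = 2 := by
  ext; push_cast; exact Real.mul_self_sqrt (by norm_num)
lemma hsR : ((sqrt2 : Ksqrt2) : ℝ) = Real.sqrt 2 := rfl
lemma hspos : (0:Ksqrt2) < sqrt2 := by
  rw [← Subtype.coe_lt_coe]; exact_mod_cast Real.sqrt_pos.2 (by norm_num)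
lemma hs0 : sqrt2 ≠ 0 := ne_of_gt hspos
lemma am (z : Ksqrt2) : (algebraMap Ksqrt2 AQ z) = ⟨z,0,0,0⟩ := QuaternionAlgebra.algebraMap_eq z
lemma hiq2 : iq * iq = -1 := by ext <;> simp [iq]
lemma hjq2 : jq * jq = algebraMap Ksqrt2 AQ (-sqrt2) := by ext <;> simp [jq, am]
lemma hij : iq * jq = kq := by ext <;> simp [iq, jq, kq]
lemma hji : jq * iq = -kq := by ext <;> simp [iq, jq, kq]
lemma decomp (x : AQ) :
    x = algebraMap Ksqrt2 AQ x.re + algebraMap Ksqrt2 AQ x.imI * iq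
      + algebraMap Ksqrt2 AQ x.imJ * jq + algebraMap Ksqrt2 AQ x.imK * kq := by
  ext <;> simp [iq, jq, kq, am]

lemma central_eq (x : AQ) (hi : x * iq = iq * x) (hj : x * jq = jq * x) :
    x = algebraMap Ksqrt2 AQ x.re := by
  have h2 := congrArg QuaternionAlgebra.imJ hi
  have h3 := congrArg QuaternionAlgebra.imK hi
  have h4 := congrArg QuaternionAlgebra.imK hj
  simp [iq, jq] at h2 h3 h4
  rw [am]; ext <;> simp <;> linarith

variable (f : AQ ≃ₐ[ℚ] AQ)

lemma not_comm (h : f iq * f jq = f jq * f iq) : False := by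
  rw [← map_mul f iq jq, ← map_mul f jq iq, hij, hji, map_neg] at h
  have h2 : kq + kq = 0 := by
    apply f.injective
    rw [map_add, map_zero]
    exact eq_neg_iff_add_eq_zero.mp h
  have := congrArg QuaternionAlgebra.imK h2
  simp [kq] at this

lemma image_scalar (z : Ksqrt2) :
    f (algebraMap Ksqrt2 AQ z) = algebraMap Ksqrt2 AQ (f (algebraMap Ksqrt2 AQ z)).re := by
  have key : ∀ y : AQ, f (algebraMap Ksqrt2 AQ z) * y = y * f (algebraMap Ksqrt2 AQ z) := by
    intro y
    have h2 := congrArg f (Algebra.commutes z (f.symm y))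
    rw [map_mul f, map_mul f, f.apply_symm_apply] at h2
    exact h2
  exact central_eq _ (key iq) (key jq)

lemma fix_sqrt2 : f (algebraMap Ksqrt2 AQ sqrt2) = algebraMap Ksqrt2 AQ sqrt2 := by
  have hsc := image_scalar f sqrt2
  set w := (f (algebraMap Ksqrt2 AQ sqrt2)).re with hw
  have hsq : f (algebraMap Ksqrt2 AQ sqrt2) * f (algebraMap Ksqrt2 AQ sqrt2)
      = algebraMap Ksqrt2 AQ 2 := by
    rw [← map_mul f, ← map_mul, hs2]
    have h2 : algebraMap Ksqrt2 AQ (2:Ksqrt2) = algebraMap ℚ AQ 2 := by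
      rw [IsScalarTower.algebraMap_apply ℚ Ksqrt2 AQ]; norm_num
    rw [h2, AlgEquiv.commutes]
  rw [hsc, ← map_mul] at hsq
  have hw2 : w * w = 2 := QuaternionAlgebra.algebraMap_injective hsq
  have hcases : w = sqrt2 ∨ w = -sqrt2 := by
    have h0 : (w - sqrt2) * (w + sqrt2) = 0 := by linear_combination hw2 - hs2
    rcases mul_eq_zero.1 h0 with h | h
    · left; linarith [sub_eq_zero.1 h]
    · right; linarith [eq_neg_of_add_eq_zero_left h]
  rcases hcases with h | h
  · rw [hsc, h]
  exfalso
  have hJ : f jq * f jq = algebraMap Ksqrt2 AQ sqrt2 := by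
    rw [← map_mul f, hjq2, map_neg, map_neg, hsc, h, map_neg, neg_neg]
  set J := f jq with hJdef
  have h1 := congrArg QuaternionAlgebra.re hJ
  have h2 := congrArg QuaternionAlgebra.imI hJ
  have h3 := congrArg QuaternionAlgebra.imJ hJ
  have h4 := congrArg QuaternionAlgebra.imK hJ
  simp [am] at h1 h2 h3 h4
  by_cases hre : J.re = 0
  · rw [hre] at h1
    have hR := congrArg Subtype.val h1
    push_cast at hR
    have h2R : (0:ℝ) < Real.sqrt 2 := Real.sqrt_pos.2 (by norm_num)
    rw [hsR] at hR
    nlinarith [mul_self_nonneg ((J.imI : ℝ)), mul_self_nonneg ((J.imJ : ℝ)),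
      mul_self_nonneg ((J.imK : ℝ))]
  · have hI0 : J.imI = 0 := by
      have hh : (2:Ksqrt2) * (J.re * J.imI) = 0 := by linear_combination h2
      rcases mul_eq_zero.1 hh with h' | h'
      · norm_num at h'
      · rcases mul_eq_zero.1 h' with h'' | h''
        · exact absurd h'' hre
        · exact h''
    have hJ0 : J.imJ = 0 := by
      have hh : (2:Ksqrt2) * (J.re * J.imJ) = 0 := by linear_combination h3
      rcases mul_eq_zero.1 hh with h' | h'
      · norm_num at h'
      · rcases mul_eq_zero.1 h' with h'' | h''
        · exact absurd h'' hre
        · exact h''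
    have hK0 : J.imK = 0 := by
      have hh : (2:Ksqrt2) * (J.re * J.imK) = 0 := by linear_combination h4
      rcases mul_eq_zero.1 hh with h' | h'
      · norm_num at h'
      · rcases mul_eq_zero.1 h' with h'' | h''
        · exact absurd h'' hre
        · exact h''
    have hJc : J = algebraMap Ksqrt2 AQ J.re := by
      rw [am]; ext <;> simp [hI0, hJ0, hK0]
    exact not_comm f (by rw [← hJdef, hJc]; exact (Algebra.commutes J.re (f iq)).symm)

lemma fix_inv (z : Ksqrt2) (ih : f (algebraMap Ksqrt2 AQ z) = algebraMap Ksqrt2 AQ z) :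
    f (algebraMap Ksqrt2 AQ z⁻¹) = algebraMap Ksqrt2 AQ z⁻¹ := by
  by_cases hz : z = 0
  · simp [hz]
  · have h1 : algebraMap Ksqrt2 AQ z * f (algebraMap Ksqrt2 AQ z⁻¹) = 1 := by
      rw [← ih, ← map_mul f, ← map_mul, mul_inv_cancel₀ hz, map_one, map_one]
    calc f (algebraMap Ksqrt2 AQ z⁻¹)
        = (algebraMap Ksqrt2 AQ z⁻¹ * algebraMap Ksqrt2 AQ z) * f (algebraMap Ksqrt2 AQ z⁻¹) := by
          rw [← map_mul, inv_mul_cancel₀ hz, map_one, one_mul]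
      _ = algebraMap Ksqrt2 AQ z⁻¹ * (algebraMap Ksqrt2 AQ z * f (algebraMap Ksqrt2 AQ z⁻¹)) :=
          mul_assoc _ _ _
      _ = algebraMap Ksqrt2 AQ z⁻¹ := by rw [h1, mul_one]

lemma fix_scalar (z : Ksqrt2) : f (algebraMap Ksqrt2 AQ z) = algebraMap Ksqrt2 AQ z := by
  obtain ⟨x, hx⟩ := z
  refine IntermediateField.adjoin_induction ℚ
    (p := fun x hx => f (algebraMap Ksqrt2 AQ ⟨x, hx⟩) = algebraMap Ksqrt2 AQ ⟨x, hx⟩)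
    ?_ ?_ ?_ ?_ ?_ hx
  · intro y hy
    rcases Set.mem_singleton_iff.1 hy with rfl
    exact fix_sqrt2 f
  · intro q
    have h1 : (⟨algebraMap ℚ ℝ q, IntermediateField.algebraMap_mem Ksqrt2 q⟩ : Ksqrt2) = algebraMap ℚ Ksqrt2 q := rfl
    rw [h1, ← IsScalarTower.algebraMap_apply ℚ Ksqrt2 AQ q, AlgEquiv.commutes]
  · intro a b ha hb iha ihb
    have h1 : (⟨a + b, add_mem ha hb⟩ : Ksqrt2) = ⟨a, ha⟩ + ⟨b, hb⟩ := rfl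
    rw [h1, map_add, map_add, iha, ihb]
  · intro a ha iha
    have h1 : (⟨a⁻¹, inv_mem ha⟩ : Ksqrt2) = (⟨a, ha⟩ : Ksqrt2)⁻¹ := rfl
    rw [h1]
    exact fix_inv f _ iha
  · intro a b ha hb iha ihb
    have h1 : (⟨a * b, mul_mem ha hb⟩ : Ksqrt2) = ⟨a, ha⟩ * ⟨b, hb⟩ := rfl
    rw [h1, map_mul, map_mul f, iha, ihb]

lemma hII : f iq * f iq = -1 := by rw [← map_mul f, hiq2, map_neg, map_one]
lemma hJJ : f jq * f jq = algebraMap Ksqrt2 AQ (-sqrt2) := by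
  rw [← map_mul f, hjq2, fix_scalar f]
lemma hIJ : f iq * f jq = -(f jq * f iq) := by
  rw [← map_mul f, ← map_mul f, hij, hji, map_neg, neg_neg]

lemma square_scalar_cases (X : AQ) (c : Ksqrt2) (hX : X * X = algebraMap Ksqrt2 AQ c) :
    X.re = 0 ∨ X = algebraMap Ksqrt2 AQ X.re := by
  by_cases hre : X.re = 0
  · exact Or.inl hre
  right
  have h2 := congrArg QuaternionAlgebra.imI hX
  have h3 := congrArg QuaternionAlgebra.imJ hX
  have h4 := congrArg QuaternionAlgebra.imK hX
  simp [am] at h2 h3 h4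
  have hI0 : X.imI = 0 := by
    have hh : (2:Ksqrt2) * (X.re * X.imI) = 0 := by linear_combination h2
    rcases mul_eq_zero.1 hh with h' | h'
    · norm_num at h'
    · rcases mul_eq_zero.1 h' with h'' | h''
      · exact absurd h'' hre
      · exact h''
  have hJ0 : X.imJ = 0 := by
    have hh : (2:Ksqrt2) * (X.re * X.imJ) = 0 := by linear_combination h3
    rcases mul_eq_zero.1 hh with h' | h'
    · norm_num at h'
    · rcases mul_eq_zero.1 h' with h'' | h''
      · exact absurd h'' hre
      · exact h''
  have hK0 : X.imK = 0 := by
    have hh : (2:Ksqrt2) * (X.re * X.imK) = 0 := by linear_combination h4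
    rcases mul_eq_zero.1 hh with h' | h'
    · norm_num at h'
    · rcases mul_eq_zero.1 h' with h'' | h''
      · exact absurd h'' hre
      · exact h''
  rw [am]; ext <;> simp [hI0, hJ0, hK0]

lemma I_pure : (f iq).re = 0 := by
  rcases square_scalar_cases (f iq) (-1) (by rw [hII, map_neg, map_one]) with h | h
  · exact h
  · exact absurd (by rw [h]; exact Algebra.commutes _ _) (fun hc => not_comm f hc)

lemma exists_u1 : ∃ u : AQˣ, (u : AQ) * iq = f iq * u := by
  set I := f iq with hI
  by_cases hcase : I = -iq
  · have hunit : jq * ((-sqrt2)⁻¹ • jq) = 1 := by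
      rw [mul_smul_comm, hjq2, Algebra.smul_def, ← map_mul, inv_mul_cancel₀ (by
        simpa using hs0), map_one]
    have hunit' : ((-sqrt2)⁻¹ • jq) * jq = 1 := by
      rw [smul_mul_assoc, hjq2, Algebra.smul_def, ← map_mul, inv_mul_cancel₀ (by
        simpa using hs0), map_one]
    refine ⟨⟨jq, (-sqrt2)⁻¹ • jq, hunit, hunit'⟩, ?_⟩
    show jq * iq = I * jq
    rw [hcase]
    ext <;> simp [iq, jq]
  · have hIp : I.re = 0 := I_pure f
    have h1 := congrArg QuaternionAlgebra.re (hII f)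
    rw [← hI] at h1
    simp [hIp] at h1
    have hu : I * iq - 1 = (⟨-1 - I.imI, 0, I.imK, -I.imJ⟩ : AQ) := by
      ext <;> simp [iq, hIp] <;> ring
    set N : Ksqrt2 := (1 + I.imI)*(1 + I.imI) + sqrt2*(I.imJ*I.imJ) + sqrt2*(I.imK*I.imK)
      with hN
    have hNne : N ≠ 0 := by
      intro h0
      apply hcase
      rw [hN] at h0
      have hR := congrArg Subtype.val h0
      push_cast at hR
      have h2R : (0:ℝ) < Real.sqrt 2 := Real.sqrt_pos.2 (by norm_num)
      rw [hsR] at hR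
      have e1 : ((1:ℝ) + (I.imI:ℝ)) * ((1:ℝ) + (I.imI:ℝ)) = 0 := by
        nlinarith [mul_self_nonneg ((I.imJ:ℝ)), mul_self_nonneg ((I.imK:ℝ)),
          mul_self_nonneg ((1:ℝ) + (I.imI:ℝ))]
      have e2 : (I.imJ:ℝ) * (I.imJ:ℝ) = 0 := by
        nlinarith [mul_self_nonneg ((I.imJ:ℝ)), mul_self_nonneg ((I.imK:ℝ)),
          mul_self_nonneg ((1:ℝ) + (I.imI:ℝ))]
      have e3 : (I.imK:ℝ) * (I.imK:ℝ) = 0 := by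
        nlinarith [mul_self_nonneg ((I.imJ:ℝ)), mul_self_nonneg ((I.imK:ℝ)),
          mul_self_nonneg ((1:ℝ) + (I.imI:ℝ))]
      have f1 : I.imI = -1 := by
        apply Subtype.val_injective
        push_cast
        have := mul_self_eq_zero.1 e1
        linarith
      have f2 : I.imJ = 0 := by
        apply Subtype.val_injective
        push_cast
        exact mul_self_eq_zero.1 e2
      have f3 : I.imK = 0 := by
        apply Subtype.val_injective
        push_cast
        exact mul_self_eq_zero.1 e3
      ext <;> simp [iq, hIp, f1, f2, f3]
    have hmul1 : (⟨-1 - I.imI, 0, I.imK, -I.imJ⟩ : AQ) * ⟨-1 - I.imI, 0, -I.imK, I.imJ⟩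
        = algebraMap Ksqrt2 AQ N := by
      rw [am, hN]; ext <;> simp <;> ring
    have hmul2 : (⟨-1 - I.imI, 0, -I.imK, I.imJ⟩ : AQ) * ⟨-1 - I.imI, 0, I.imK, -I.imJ⟩
        = algebraMap Ksqrt2 AQ N := by
      rw [am, hN]; ext <;> simp <;> ring
    have hunit : (I * iq - 1) * (N⁻¹ • (⟨-1 - I.imI, 0, -I.imK, I.imJ⟩ : AQ)) = 1 := by
      rw [hu, mul_smul_comm, hmul1, Algebra.smul_def, ← map_mul,
        inv_mul_cancel₀ hNne, map_one]
    have hunit' : (N⁻¹ • (⟨-1 - I.imI, 0, -I.imK, I.imJ⟩ : AQ)) * (I * iq - 1) = 1 := by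
      rw [hu, smul_mul_assoc, hmul2, Algebra.smul_def, ← map_mul,
        inv_mul_cancel₀ hNne, map_one]
    refine ⟨⟨I * iq - 1, N⁻¹ • (⟨-1 - I.imI, 0, -I.imK, I.imJ⟩ : AQ), hunit, hunit'⟩, ?_⟩
    show (I * iq - 1) * iq = I * (I * iq - 1)
    have e1 : (I * iq - 1) * iq = I * (iq * iq) - iq := by noncomm_ring
    have e2 : I * (I * iq - 1) = (I * I) * iq - I := by noncomm_ring
    have hII' : I * I = -1 := by rw [hI]; exact hII f
    rw [e1, e2, hiq2, hII']
    noncomm_ring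

lemma main : ∃ u : AQˣ, ((u:AQ) * iq = f iq * u) ∧ ((u:AQ) * jq = f jq * u) := by
  obtain ⟨u₁, hu₁⟩ := exists_u1 f
  set J₂ : AQ := ↑u₁⁻¹ * (f jq * ↑u₁) with hJ₂
  have hiqc : iq = ↑u₁⁻¹ * (f iq * ↑u₁) := by rw [← hu₁, Units.inv_mul_cancel_left]
  have hu₁J : (u₁ : AQ) * J₂ = f jq * ↑u₁ := by rw [hJ₂, Units.mul_inv_cancel_left]
  have hJ₂sq : J₂ * J₂ = algebraMap Ksqrt2 AQ (-sqrt2) := by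
    calc J₂ * J₂ = ↑u₁⁻¹ * ((f jq * f jq) * ↑u₁) := by
          rw [hJ₂]; simp only [mul_assoc, Units.mul_inv_cancel_left]
      _ = ↑u₁⁻¹ * (↑u₁ * algebraMap Ksqrt2 AQ (-sqrt2)) := by
          rw [hJJ f, Algebra.commutes]
      _ = _ := Units.inv_mul_cancel_left _ _
  have key : ∀ X Y : AQ, X * Y = -(Y * X) →
      (↑u₁⁻¹ * (X * ↑u₁)) * (↑u₁⁻¹ * (Y * ↑u₁)) =
        -((↑u₁⁻¹ * (Y * ↑u₁)) * (↑u₁⁻¹ * (X * ↑u₁))) := by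
    intro X Y h
    simp only [mul_assoc, Units.mul_inv_cancel_left]
    rw [← mul_assoc X Y, h]
    simp [mul_assoc]
  have hJ₂i : iq * J₂ = -(J₂ * iq) := by
    have h := key (f iq) (f jq) (hIJ f)
    rw [← hiqc, ← hJ₂] at h
    exact h
  have c1 := congrArg QuaternionAlgebra.re hJ₂i
  have c2 := congrArg QuaternionAlgebra.imI hJ₂i
  simp [iq] at c1 c2
  have hre : J₂.re = 0 := by linarith
  have himI : J₂.imI = 0 := by linarith
  have d1 := congrArg QuaternionAlgebra.re hJ₂sq
  simp [am, hre, himI] at d1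
  have hqr : J₂.imJ * J₂.imJ + J₂.imK * J₂.imK = 1 := by
    have h := mul_left_cancel₀ hs0 (show sqrt2 * (J₂.imJ * J₂.imJ + J₂.imK * J₂.imK) = sqrt2 * 1 by
      ring_nf; linear_combination -d1)
    exact h
  have hv : ∃ v : AQˣ, ((v:AQ) * iq = iq * v) ∧ ((v:AQ) * jq = J₂ * v) := by
    by_cases hq : 1 + J₂.imJ = 0
    · have hr0 : J₂.imK = 0 := by
        have hq' : J₂.imJ = -1 := by linarith
        have : J₂.imK * J₂.imK = 0 := by rw [hq'] at hqr; linear_combination hqr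
        exact mul_self_eq_zero.1 this
      have hq' : J₂.imJ = -1 := by linarith
      have hJ₂eq : J₂ = -jq := by
        ext <;> simp [jq, hre, himI, hr0, hq']
      have hunit : iq * (-iq) = 1 := by rw [mul_neg, hiq2]; simp
      refine ⟨⟨iq, -iq, hunit, by rw [neg_mul, hiq2]; simp⟩, rfl, ?_⟩
      show iq * jq = J₂ * iq
      rw [hJ₂eq]
      ext <;> simp [iq, jq]
    · set q := J₂.imJ
      set r := J₂.imK
      set M : Ksqrt2 := (1+q)*(1+q) + r*r with hM
      have hM2 : M = 2*(1+q) := by rw [hM]; linear_combination hqr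
      have hMne : M ≠ 0 := by
        rw [hM2]
        intro h
        rcases mul_eq_zero.1 h with h' | h'
        · norm_num at h'
        · exact hq h'
      have hm1 : (⟨1+q, r, 0, 0⟩ : AQ) * ⟨1+q, -r, 0, 0⟩ = algebraMap Ksqrt2 AQ M := by
        rw [am, hM]; ext <;> simp <;> ring
      have hm2 : (⟨1+q, -r, 0, 0⟩ : AQ) * ⟨1+q, r, 0, 0⟩ = algebraMap Ksqrt2 AQ M := by
        rw [am, hM]; ext <;> simp <;> ring
      have hunit : (⟨1+q, r, 0, 0⟩ : AQ) * (M⁻¹ • (⟨1+q, -r, 0, 0⟩ : AQ)) = 1 := by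
        rw [mul_smul_comm, hm1, Algebra.smul_def, ← map_mul, inv_mul_cancel₀ hMne, map_one]
      have hunit' : (M⁻¹ • (⟨1+q, -r, 0, 0⟩ : AQ)) * (⟨1+q, r, 0, 0⟩ : AQ) = 1 := by
        rw [smul_mul_assoc, hm2, Algebra.smul_def, ← map_mul, inv_mul_cancel₀ hMne, map_one]
      refine ⟨⟨⟨1+q, r, 0, 0⟩, M⁻¹ • (⟨1+q, -r, 0, 0⟩ : AQ), hunit, hunit'⟩, ?_, ?_⟩
      · show (⟨1+q, r, 0, 0⟩ : AQ) * iq = iq * ⟨1+q, r, 0, 0⟩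
        ext <;> simp [iq]
      · show (⟨1+q, r, 0, 0⟩ : AQ) * jq = J₂ * ⟨1+q, r, 0, 0⟩
        have hJ₂d : J₂ = (⟨0, 0, q, r⟩ : AQ) := by ext <;> simp [hre, himI] <;> rfl
        rw [hJ₂d]
        have hqrR := congrArg Subtype.val hqr
        push_cast at hqrR
        refine QuaternionAlgebra.ext ?_ ?_ ?_ ?_ <;> simp [jq] <;>
          first
            | linear_combination (-2:Ksqrt2) * hqr
            | linear_combination -hqr
            | linear_combination (2:Ksqrt2) * hqr
            | linear_combination hqr
            | (ring_nf; all_goals (ring_nf at hqr; linarith [hqr]))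
  obtain ⟨v, hvi, hvj⟩ := hv
  refine ⟨u₁ * v, ?_, ?_⟩
  · show ((u₁ : AQ) * v) * iq = f iq * ((u₁ : AQ) * v)
    rw [mul_assoc, hvi, ← mul_assoc, hu₁, mul_assoc]
  · show ((u₁ : AQ) * v) * jq = f jq * ((u₁ : AQ) * v)
    rw [mul_assoc, hvj, ← mul_assoc, hu₁J, mul_assoc]

end Stmt7

open Stmt7 in
/-- Every `ℚ`-algebra automorphism of the quaternion algebra
`A = (−1, −√2)` over `K = ℚ(√2)` is inner: for every ring automorphism `f` of `A` fixing `ℚ`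
pointwise there is a unit `u` of `A` with `f x = u * x * u⁻¹` for all `x`. -/
theorem stmt_7 (f : ℍ[Ksqrt2, -1, -sqrt2] ≃ₐ[ℚ] ℍ[Ksqrt2, -1, -sqrt2]) :
    ∃ u : (ℍ[Ksqrt2, -1, -sqrt2])ˣ, ∀ x, f x = ↑u * x * ↑u⁻¹ := by
  obtain ⟨u, hui, huj⟩ := main f
  have huk : (u:AQ) * kq = f kq * u := by
    rw [← hij, map_mul f, ← mul_assoc, hui, mul_assoc, huj, ← mul_assoc]
  have hscal : ∀ c : Ksqrt2, (u:AQ) * algebraMap Ksqrt2 AQ c = algebraMap Ksqrt2 AQ c * u :=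
    fun c => (Algebra.commutes c ((u:AQ))).symm
  refine ⟨u, fun x => ?_⟩
  have hux : (u:AQ) * x = f x * u := by
    conv_lhs => rw [decomp x]
    conv_rhs => rw [decomp x]
    rw [map_add, map_add, map_add, map_mul f, map_mul f, map_mul f,
      fix_scalar f, fix_scalar f, fix_scalar f, fix_scalar f]
    rw [mul_add, mul_add, mul_add, add_mul, add_mul, add_mul]
    congr 1
    congr 1
    congr 1
    · exact hscal _
    · rw [← mul_assoc, hscal, mul_assoc, hui, ← mul_assoc]
    · rw [← mul_assoc, hscal, mul_assoc, huj, ← mul_assoc]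
    · rw [← mul_assoc, hscal, mul_assoc, huk, ← mul_assoc]
  calc f x = ((f x) * u) * ↑u⁻¹ := (Units.mul_inv_cancel_right _ _).symm
    _ = (↑u * x) * ↑u⁻¹ := by rw [hux]
    _ = ↑u * x * ↑u⁻¹ := rfl
end
end

section
/- Let k be a field of characteristic p > 0 and n ≥ 1, with A = A_n(k) the Weyl algebra and P = k[z_1,…,z_{2n}] acting via z_i ↦ x_i^p. Then the map sending x_i to (−1)^{ω_i} x_i (ω_i = 0 for i ≤ n, ω_i = 1 for i > n) induces a P-algebra isomorphism from the opposite algebra A^op onto ω(−1)_* A, i.e., onto A with the twisted P-algebra structure z_i ↦ (−1)^{-ω_i} x_i^p. -/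
open scoped TensorProduct

noncomputable section

/-- The defining relations of the Weyl algebra `A_n(k)`:
`x_i x_j − x_j x_i = δ_{i,j+n} − δ_{i+n,j}` for `1 ≤ i, j ≤ 2n` (here indexed by `Fin (2*n)`). -/
inductive WeylRel (k : Type) [Field k] (n : ℕ) :
    FreeAlgebra k (Fin (2 * n)) → FreeAlgebra k (Fin (2 * n)) → Prop
  | rel (i j : Fin (2 * n)) : WeylRel k n
      (FreeAlgebra.ι k i * FreeAlgebra.ι k j)
      (FreeAlgebra.ι k j * FreeAlgebra.ι k i +
        algebraMap k (FreeAlgebra k (Fin (2 * n)))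
          ((if (i : ℕ) = (j : ℕ) + n then 1 else 0) -
           (if (j : ℕ) = (i : ℕ) + n then 1 else 0)))

/-- The Weyl algebra `A_n(k)`, the quotient of the free `k`-algebra on `2n` generators by the
relations `x_i x_j − x_j x_i = δ_{i,j+n} − δ_{i+n,j}`. -/
abbrev WeylAlgebra (k : Type) [Field k] (n : ℕ) : Type := RingQuot (WeylRel k n)

variable (k : Type) [Field k] (n : ℕ)

/-- The generators `x_i` of the Weyl algebra. -/
def wx (i : Fin (2 * n)) : WeylAlgebra k n :=
  RingQuot.mkAlgHom k (WeylRel k n) (FreeAlgebra.ι k i)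

lemma wx_rel (i j : Fin (2 * n)) :
    wx k n i * wx k n j = wx k n j * wx k n i +
      algebraMap k (WeylAlgebra k n)
        ((if (i : ℕ) = (j : ℕ) + n then 1 else 0) -
         (if (j : ℕ) = (i : ℕ) + n then 1 else 0)) := by
  have h := RingQuot.mkAlgHom_rel k (WeylRel.rel (k := k) (n := n) i j)
  simpa [wx, map_mul, map_add, AlgHom.commutes] using h

lemma wx_pow_comm (i j : Fin (2 * n)) (m : ℕ) :
    wx k n j * wx k n i ^ (m + 1) = wx k n i ^ (m + 1) * wx k n j +
      algebraMap k (WeylAlgebra k n)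
        (((m : k) + 1) * ((if (j : ℕ) = (i : ℕ) + n then 1 else 0) -
          (if (i : ℕ) = (j : ℕ) + n then 1 else 0))) * wx k n i ^ m := by
  set c : k := (if (j : ℕ) = (i : ℕ) + n then 1 else 0) -
      (if (i : ℕ) = (j : ℕ) + n then 1 else 0) with hc
  have base : wx k n j * wx k n i = wx k n i * wx k n j + algebraMap k (WeylAlgebra k n) c :=
    wx_rel k n j i
  induction m with
  | zero => simpa using base
  | succ m ih =>
    have h1 : wx k n j * wx k n i ^ (m + 2) = (wx k n j * wx k n i ^ (m + 1)) * wx k n i := by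
      rw [pow_succ, ← mul_assoc]
    rw [h1, ih, add_mul, mul_assoc, mul_assoc, ← pow_succ, base, mul_add, ← mul_assoc,
      ← pow_succ]
    have h2 : wx k n i ^ (m + 1) * algebraMap k (WeylAlgebra k n) c =
        algebraMap k (WeylAlgebra k n) c * wx k n i ^ (m + 1) :=
      (Algebra.commutes c _).symm
    rw [h2]
    have h3 : ((m : k) + 1 + 1) * c = c + ((m : k) + 1) * c := by ring
    rw [Nat.cast_add, Nat.cast_one, h3, map_add, add_mul]
    noncomm_ring

/-- In characteristic `p`, the `p`-th powers of the generators are central: `x_j` commutes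
with `x_i ^ p` (here `p = ringChar k`). -/
lemma wx_pow_char_comm (i j : Fin (2 * n)) :
    wx k n j * wx k n i ^ ringChar k = wx k n i ^ ringChar k * wx k n j := by
  rcases Nat.eq_zero_or_pos (ringChar k) with h | h
  · rw [h, pow_zero, mul_one, one_mul]
  · obtain ⟨m, hm⟩ : ∃ m, ringChar k = m + 1 := ⟨ringChar k - 1, by omega⟩
    have hcast : (m : k) + 1 = 0 := by
      have h0 : ((ringChar k : ℕ) : k) = 0 := ringChar.Nat.cast_ringChar
      rw [hm] at h0
      push_cast at h0
      exact h0
    conv_lhs => rw [hm, wx_pow_comm, hcast, zero_mul, map_zero, zero_mul, add_zero, ← hm]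

lemma wx_pow_mem_center (i : Fin (2 * n)) :
    wx k n i ^ ringChar k ∈ Subalgebra.center k (WeylAlgebra k n) := by
  rw [Subalgebra.mem_center_iff]
  intro b
  obtain ⟨y, rfl⟩ := RingQuot.mkAlgHom_surjective k (WeylRel k n) b
  induction y using FreeAlgebra.induction with
  | grade0 r => rw [AlgHom.commutes]; exact Algebra.commutes r _
  | grade1 j => exact wx_pow_char_comm k n i j
  | mul y z hy hz => rw [map_mul, mul_assoc, hz, ← mul_assoc, hy, mul_assoc]
  | add y z hy hz => rw [map_add, add_mul, mul_add, hy, hz]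

/-- The polynomial ring `P = k[z_1, …, z_{2n}]`. -/
abbrev WeylCenter (k : Type) [Field k] (n : ℕ) : Type := MvPolynomial (Fin (2 * n)) k

/-- In characteristic `p`, the element `x_i^p` is central in `A_n(k)` (here `p = ringChar k`). -/
def weylCenterGen (i : Fin (2 * n)) : Subalgebra.center k (WeylAlgebra k n) :=
  ⟨wx k n i ^ ringChar k, wx_pow_mem_center k n i⟩

/-- The `k`-algebra map `P → A_n(k)`, `z_i ↦ x_i^p`, where `p` is the characteristic of `k`. -/
def weylCentralMap : WeylCenter k n →ₐ[k] WeylAlgebra k n :=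
  (Subalgebra.center k (WeylAlgebra k n)).val.comp (MvPolynomial.aeval (weylCenterGen k n))

/-- `A_n(k)` as a `P`-algebra via `z_i ↦ x_i^p` (the image of `P` being central). -/
instance : Algebra (WeylCenter k n) (WeylAlgebra k n) :=
  RingHom.toAlgebra' (weylCentralMap k n).toRingHom fun q x =>
    (Subalgebra.mem_center_iff.mp (MvPolynomial.aeval (weylCenterGen k n) q).2 x).symm

/-- `ω_i`: `0` for `i ≤ n` and `1` for `i > n` (with the 0-based indexing of `Fin (2*n)`:
`0` for `i.val < n`, `1` otherwise). -/
def weylOmega (i : Fin (2 * n)) : ℕ := if (i : ℕ) < n then 0 else 1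

/-- The central element `c^{−ω_i} · x_i^p` of `A_n(k)`. -/
def weylTwistGen (c : k) (i : Fin (2 * n)) : Subalgebra.center k (WeylAlgebra k n) :=
  ⟨(c ^ weylOmega n i)⁻¹ • wx k n i ^ ringChar k,
    Subalgebra.smul_mem _ (wx_pow_mem_center k n i) _⟩

/-- The twisted `k`-algebra map `P → A_n(k)`, `z_i ↦ c^{−ω_i} · x_i^p`. -/
def weylTwistMap (c : k) : WeylCenter k n →ₐ[k] WeylAlgebra k n :=
  (Subalgebra.center k (WeylAlgebra k n)).val.comp (MvPolynomial.aeval (weylTwistGen k n c))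

/-- `ω(c)_* A_n(k)` : the Weyl algebra with the twisted `P`-algebra structure
`z_i ↦ c^{−ω_i} · x_i^p`. -/
def TwistedWeyl (c : k) : Type := WeylAlgebra k n

instance (c : k) : Ring (TwistedWeyl k n c) := inferInstanceAs (Ring (WeylAlgebra k n))

instance (c : k) : Algebra k (TwistedWeyl k n c) :=
  inferInstanceAs (Algebra k (WeylAlgebra k n))

/-- The twisted `P`-algebra structure on `ω(c)_* A_n(k)`. -/
instance (c : k) : Algebra (WeylCenter k n) (TwistedWeyl k n c) :=
  RingHom.toAlgebra' (weylTwistMap k n c).toRingHom fun q x =>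
    (Subalgebra.mem_center_iff.mp (MvPolynomial.aeval (weylTwistGen k n c) q).2 x).symm

/-- The generators `x_i`, viewed in the twisted Weyl algebra `ω(c)_* A_n(k)`. -/
def twx (c : k) (i : Fin (2 * n)) : TwistedWeyl k n c := wx k n i

end


section Aux

variable (k : Type) [Field k] (n : ℕ)

lemma weyl_sgn_rel (i j : Fin (2 * n)) :
    ((-1 : k) ^ weylOmega n i * (-1 : k) ^ weylOmega n j) *
      ((if (i : ℕ) = (j : ℕ) + n then (1 : k) else 0) -
       (if (j : ℕ) = (i : ℕ) + n then 1 else 0)) =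
    -((if (i : ℕ) = (j : ℕ) + n then (1 : k) else 0) -
      (if (j : ℕ) = (i : ℕ) + n then 1 else 0)) := by
  have hi := i.isLt; have hj := j.isLt
  simp only [weylOmega]
  split_ifs <;> first | (exfalso; omega) | norm_num

noncomputable def weylNegMapAux : FreeAlgebra k (Fin (2 * n)) →ₐ[k] (WeylAlgebra k n)ᵐᵒᵖ :=
  FreeAlgebra.lift k fun i => ((-1 : k) ^ weylOmega n i) • MulOpposite.op (wx k n i)

lemma weylNegMapAux_rel : ∀ ⦃a b⦄, WeylRel k n a b →
    weylNegMapAux k n a = weylNegMapAux k n b := by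
  rintro _ _ ⟨i, j⟩
  simp only [weylNegMapAux, map_mul, map_add, FreeAlgebra.lift_ι_apply, AlgHom.commutes]
  rw [smul_mul_smul_comm, smul_mul_smul_comm, ← MulOpposite.op_mul, ← MulOpposite.op_mul,
    wx_rel k n j i, MulOpposite.op_add, smul_add, mul_comm ((-1 : k) ^ weylOmega n j)]
  congr 1
  rw [← MulOpposite.algebraMap_apply, Algebra.smul_def, ← map_mul]
  congr 1
  linear_combination -weyl_sgn_rel k n i j

noncomputable def weylNegMap : WeylAlgebra k n →ₐ[k] (WeylAlgebra k n)ᵐᵒᵖ :=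
  RingQuot.liftAlgHom k ⟨weylNegMapAux k n, weylNegMapAux_rel k n⟩

lemma weylNegMap_wx (i : Fin (2 * n)) :
    weylNegMap k n (wx k n i) = ((-1 : k) ^ weylOmega n i) • MulOpposite.op (wx k n i) := by
  rw [wx, weylNegMap, RingQuot.liftAlgHom_mkAlgHom_apply]
  simp only [weylNegMapAux, FreeAlgebra.lift_ι_apply]
  rfl

lemma weyl_sgn_sq (m : ℕ) : ((-1 : k) ^ m) * ((-1 : k) ^ m) = 1 := by
  rw [← pow_add]
  exact Even.neg_one_pow ⟨m, rfl⟩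

lemma weylNegMap_invol (a : WeylAlgebra k n) :
    weylNegMap k n (MulOpposite.unop (weylNegMap k n a)) = MulOpposite.op a := by
  obtain ⟨y, rfl⟩ := RingQuot.mkAlgHom_surjective k (WeylRel k n) a
  induction y using FreeAlgebra.induction with
  | grade0 r =>
    simp only [AlgHom.commutes, MulOpposite.algebraMap_apply, MulOpposite.unop_op]
  | grade1 i =>
    show weylNegMap k n (MulOpposite.unop (weylNegMap k n (wx k n i))) =
      MulOpposite.op (wx k n i)
    rw [weylNegMap_wx, MulOpposite.unop_smul, MulOpposite.unop_op, map_smul, weylNegMap_wx,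
      smul_smul, weyl_sgn_sq, one_smul]
  | mul y z hy hz =>
    rw [map_mul, map_mul, MulOpposite.unop_mul, map_mul, hy, hz, ← MulOpposite.op_mul]
  | add y z hy hz =>
    rw [map_add, map_add, MulOpposite.unop_add, map_add, hy, hz, ← MulOpposite.op_add]

lemma weylNegMap_bijective : Function.Bijective (weylNegMap k n) := by
  constructor
  · intro a b hab
    have h := congrArg (fun x => weylNegMap k n (MulOpposite.unop x)) hab
    simp only [weylNegMap_invol] at h
    exact MulOpposite.op_injective h
  · intro b
    refine ⟨MulOpposite.unop (weylNegMap k n (MulOpposite.unop b)), ?_⟩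
    rw [weylNegMap_invol, MulOpposite.op_unop]

/-- The map `A → A^op`, `x_i ↦ (-1)^{ω_i} op x_i`, as a `k`-algebra isomorphism. -/
noncomputable def weylNegEquiv : WeylAlgebra k n ≃ₐ[k] (WeylAlgebra k n)ᵐᵒᵖ :=
  AlgEquiv.ofBijective (weylNegMap k n) (weylNegMap_bijective k n)

lemma weylNegEquiv_symm_op_wx (i : Fin (2 * n)) :
    (weylNegEquiv k n).symm (MulOpposite.op (wx k n i)) =
      ((-1 : k) ^ weylOmega n i) • wx k n i := by
  rw [AlgEquiv.symm_apply_eq]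
  have h : weylNegMap k n (((-1 : k) ^ weylOmega n i) • wx k n i) = MulOpposite.op (wx k n i) := by
    rw [map_smul, weylNegMap_wx, smul_smul, weyl_sgn_sq, one_smul]
  exact h.symm

end Aux

/-- Let `k` be a field of characteristic `p > 0` and `n ≥ 1`, with
`A = A_n(k)` and `P = k[z_1,…,z_{2n}]` acting via `z_i ↦ x_i^p`.  The map `x_i ↦ (−1)^{ω_i} x_i`
induces a `P`-algebra isomorphism from the opposite algebra `A^op` onto `ω(−1)_* A`. -/
theorem stmt_11 (k : Type) [Field k] (n p : ℕ) [CharP k p] (hp : 0 < p) (hn : 1 ≤ n) :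
    ∃ g : (WeylAlgebra k n)ᵐᵒᵖ ≃ₐ[WeylCenter k n] TwistedWeyl k n (-1),
      ∀ i : Fin (2 * n),
        g (MulOpposite.op (wx k n i)) = ((-1 : k) ^ weylOmega n i) • twx k n (-1) i := by

  haveI : NeZero p := ⟨hp.ne'⟩
  haveI hFp : Fact p.Prime := CharP.char_is_prime_of_pos k p
  have hrc : ringChar k = p := ringChar.eq k p
  set e := (weylNegEquiv k n).symm with he
  -- action on p-th powers of generators
  have hpow : ∀ i : Fin (2 * n),
      e (MulOpposite.op (wx k n i ^ ringChar k)) =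
        ((-1 : k) ^ weylOmega n i) • wx k n i ^ ringChar k := by
    intro i
    rw [MulOpposite.op_pow, map_pow, weylNegEquiv_symm_op_wx, smul_pow, ← pow_mul,
      mul_comm (weylOmega n i), pow_mul, hrc, neg_one_pow_char k p]
  have hinv : ∀ m : ℕ, ((-1 : k) ^ m)⁻¹ = (-1 : k) ^ m := by
    intro m
    exact inv_eq_of_mul_eq_one_right (weyl_sgn_sq k m)
  -- the twisted scalar compatibility
  have hcomm : ∀ q : WeylCenter k n,
      e (algebraMap (WeylCenter k n) (WeylAlgebra k n)ᵐᵒᵖ q) =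
        algebraMap (WeylCenter k n) (TwistedWeyl k n (-1)) q := by
    intro q
    have hA : ∀ q : WeylCenter k n,
        algebraMap (WeylCenter k n) (WeylAlgebra k n)ᵐᵒᵖ q =
          MulOpposite.op
            ((MvPolynomial.aeval (weylCenterGen k n) q : Subalgebra.center k (WeylAlgebra k n)) :
              WeylAlgebra k n) := fun q => rfl
    have hT : ∀ q : WeylCenter k n,
        algebraMap (WeylCenter k n) (TwistedWeyl k n (-1)) q =
          ((MvPolynomial.aeval (weylTwistGen k n (-1)) q :
              Subalgebra.center k (WeylAlgebra k n)) : WeylAlgebra k n) := fun _ => rfl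
    rw [hA, hT]
    induction q using MvPolynomial.induction_on with
    | C a =>
      simp only [MvPolynomial.aeval_C]
      show e (MulOpposite.op ((algebraMap k (WeylAlgebra k n)) a)) =
        algebraMap k (WeylAlgebra k n) a
      rw [← MulOpposite.algebraMap_apply, AlgEquiv.commutes]
    | add q r hq hr =>
      rw [map_add, map_add, Subalgebra.coe_add, Subalgebra.coe_add, MulOpposite.op_add,
        map_add, hq, hr]
    | mul_X q i hq =>
      rw [map_mul, map_mul, Subalgebra.coe_mul, Subalgebra.coe_mul, MulOpposite.op_mul,
        map_mul, hq]
      have hGi : ((MvPolynomial.aeval (weylCenterGen k n) (MvPolynomial.X i : WeylCenter k n) :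
          Subalgebra.center k (WeylAlgebra k n)) : WeylAlgebra k n) = wx k n i ^ ringChar k := by
        rw [MvPolynomial.aeval_X]; rfl
      have hTi : ((MvPolynomial.aeval (weylTwistGen k n (-1)) (MvPolynomial.X i : WeylCenter k n) :
          Subalgebra.center k (WeylAlgebra k n)) : WeylAlgebra k n) =
          ((-1 : k) ^ weylOmega n i) • wx k n i ^ ringChar k := by
        rw [MvPolynomial.aeval_X]
        show ((-1 : k) ^ weylOmega n i)⁻¹ • wx k n i ^ ringChar k = _
        rw [hinv]
      rw [hGi, hTi, hpow]
      have hc : ∀ b : WeylAlgebra k n,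
          (((-1 : k) ^ weylOmega n i) • wx k n i ^ ringChar k) * b =
            b * (((-1 : k) ^ weylOmega n i) • wx k n i ^ ringChar k) := by
        intro b
        rw [smul_mul_assoc, mul_smul_comm,
          Subalgebra.mem_center_iff.mp (wx_pow_mem_center k n i) b]
      exact hc _
  refine ⟨AlgEquiv.ofRingEquiv (f := (e.toRingEquiv :
      (WeylAlgebra k n)ᵐᵒᵖ ≃+* TwistedWeyl k n (-1))) hcomm, ?_⟩
  intro i
  show e (MulOpposite.op (wx k n i)) = ((-1 : k) ^ weylOmega n i) • wx k n i
  exact weylNegEquiv_symm_op_wx k n i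
end
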